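/- Let κ : [r₀, r₁] → ℝ be positive and differentiable, N continuous and nonnegative, ε > 0, and suppose (N(r) − ε)·κ(r)/r ≤ κ'(r) for all r. If κ(r₁) ≤ (r₁/r₀)^(a−ε)·κ(r₀) for some a ≥ 0, then there exists t ∈ [r₀, r₁] with N(t) ≤ a. -/
import Mathlib


open Set

/-- Slow growth of κ forces the frequency function to be ≤ a somewhere. -/
theorem stmt6 (r₀ r₁ a ε : ℝ) (κ N κ' : ℝ → ℝ)
    (hr₀ : 0 < r₀) (hr : r₀ < r₁) (hε : 0 < ε) (ha : 0 ≤ a)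
    (hκpos : ∀ r ∈ Icc r₀ r₁, 0 < κ r)
    (hκderiv : ∀ r ∈ Icc r₀ r₁, HasDerivAt κ (κ' r) r)
    (hNcont : ContinuousOn N (Icc r₀ r₁))
    (hNnonneg : ∀ r ∈ Icc r₀ r₁, 0 ≤ N r)
    (hlow : ∀ r ∈ Icc r₀ r₁, (N r - ε) * κ r / r ≤ κ' r)
    (hslow : κ r₁ ≤ (r₁ / r₀) ^ (a - ε) * κ r₀) :
    ∃ t ∈ Icc r₀ r₁, N t ≤ a := by
  by_contra h
  push_neg at h
  set f : ℝ → ℝ := fun r => Real.log (κ r) - (a - ε) * Real.log r with hf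
  have hrpos : ∀ r ∈ Icc r₀ r₁, 0 < r := fun r hrm => lt_of_lt_of_le hr₀ hrm.1
  have hfderiv : ∀ r ∈ Icc r₀ r₁,
      HasDerivAt f (κ' r / κ r - (a - ε) * (1 / r)) r := by
    intro r hrm
    exact ((hκderiv r hrm).log (hκpos r hrm).ne')
      |>.sub (((Real.hasDerivAt_log (hrpos r hrm).ne').const_mul (a - ε)).congr_deriv
        (by ring))
  have hfcont : ContinuousOn f (Icc r₀ r₁) :=
    fun r hrm => (hfderiv r hrm).continuousAt.continuousWithinAt
  have hmono : StrictMonoOn f (Icc r₀ r₁) := by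
    apply strictMonoOn_of_deriv_pos (convex_Icc _ _) hfcont
    intro x hx
    rw [interior_Icc] at hx
    have hxm : x ∈ Icc r₀ r₁ := Ioo_subset_Icc_self hx
    rw [(hfderiv x hxm).deriv]
    have hxpos := hrpos x hxm
    have hκx := hκpos x hxm
    have h1 : (N x - ε) * κ x / x ≤ κ' x := hlow x hxm
    have h1' : (N x - ε) * κ x ≤ κ' x * x := by
      rw [← div_le_iff₀ hxpos]; exact h1
    rw [sub_pos, mul_one_div, div_lt_div_iff₀ hxpos hκx]
    nlinarith [h x hxm, hκx, h1']
  have hlt : f r₀ < f r₁ :=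
    hmono (left_mem_Icc.mpr hr.le) (right_mem_Icc.mpr hr.le) hr
  have hκ₀ := hκpos r₀ (left_mem_Icc.mpr hr.le)
  have hκ₁ := hκpos r₁ (right_mem_Icc.mpr hr.le)
  have hb : (0:ℝ) < r₁ / r₀ := div_pos (hr₀.trans hr) hr₀
  have hlog : Real.log (κ r₁) ≤ (a - ε) * Real.log (r₁ / r₀) + Real.log (κ r₀) := by
    calc Real.log (κ r₁) ≤ Real.log ((r₁ / r₀) ^ (a - ε) * κ r₀) :=
          Real.log_le_log hκ₁ hslow
      _ = (a - ε) * Real.log (r₁ / r₀) + Real.log (κ r₀) := by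
          rw [Real.log_mul (Real.rpow_pos_of_pos hb _).ne' hκ₀.ne', Real.log_rpow hb]
  rw [Real.log_div (hr₀.trans hr).ne' hr₀.ne'] at hlog
  simp only [hf] at hlt
  nlinarith [hlt, hlog]
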